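/- On ℝ^6 with standard inner product and standard orthonormal basis e_1, …, e_6, let ω₀ = e^{12} + e^{34} + e^{56} and Re Ω₀ = e^{135} − e^{146} − e^{236} − e^{245}. If h is a symmetric bilinear form on ℝ^6 with ∑_{i=1}^6 h(e_i, e_i) = 0, h_*ω₀ = 0, and h_*(Re Ω₀) = 0, then h = 0. -/

import Mathlib

noncomputable section

/-- The `i`-th standard basis vector of `ℝ^6`. -/
def sb (i : Fin 6) : EuclideanSpace ℝ (Fin 6) := EuclideanSpace.single i (1 : ℝ)

/-- The basic alternating 2-form `e^i ∧ e^j` on `ℝ^6` (determinant convention). -/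
def form2 (i j : Fin 6) : (Fin 2 → EuclideanSpace ℝ (Fin 6)) → ℝ :=
  fun v => v 0 i * v 1 j - v 0 j * v 1 i

/-- The basic alternating 3-form `e^i ∧ e^j ∧ e^k` on `ℝ^6` (determinant convention). -/
def form3 (i j k : Fin 6) : (Fin 3 → EuclideanSpace ℝ (Fin 6)) → ℝ :=
  fun v => Matrix.det !![v 0 i, v 0 j, v 0 k; v 1 i, v 1 j, v 1 k; v 2 i, v 2 j, v 2 k]

/-- The standard 2-form `ω₀ = e^{12} + e^{34} + e^{56}` (indices shifted to `0,…,5`). -/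
def omega0 : (Fin 2 → EuclideanSpace ℝ (Fin 6)) → ℝ :=
  fun v => form2 0 1 v + form2 2 3 v + form2 4 5 v

/-- `Re Ω₀ = e^{135} − e^{146} − e^{236} − e^{245}` (indices shifted to `0,…,5`). -/
def reOmega0 : (Fin 3 → EuclideanSpace ℝ (Fin 6)) → ℝ :=
  fun v => form3 0 2 4 v - form3 0 3 5 v - form3 1 2 5 v - form3 1 3 4 v

/-- The standard complex structure `J₀` on `ℝ^6`:
`J₀e₁ = e₂, J₀e₂ = −e₁, J₀e₃ = e₄, J₀e₄ = −e₃, J₀e₅ = e₆, J₀e₆ = −e₅`. -/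
def J0 : EuclideanSpace ℝ (Fin 6) → EuclideanSpace ℝ (Fin 6) := fun v =>
  EuclideanSpace.single 0 (-(v 1)) + EuclideanSpace.single 1 (v 0) +
    EuclideanSpace.single 2 (-(v 3)) + EuclideanSpace.single 3 (v 2) +
    EuclideanSpace.single 4 (-(v 5)) + EuclideanSpace.single 5 (v 4)

/-- The pointwise value of the wedge product `α ∧ κ` of a 1-form `α` with a `k`-form `κ`. -/
def wedge1 {E : Type*} [AddCommGroup E] [Module ℝ E] {k : ℕ}
    (α : E → ℝ) (κ : (Fin k → E) → ℝ) : (Fin (k + 1) → E) → ℝ :=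
  fun v => ∑ i : Fin (k + 1), (-1 : ℝ) ^ (i : ℕ) * α (v i) * κ (fun j => v (i.succAbove j))

/-- The interior product `ι_x κ`: insertion of `x` into the first argument. -/
def ins {E : Type*} [AddCommGroup E] [Module ℝ E] {k : ℕ}
    (x : E) (κ : (Fin (k + 1) → E) → ℝ) : (Fin k → E) → ℝ :=
  fun v => κ (Fin.cons x v)

/-- `h_*κ := -∑ j, h(e_j, ·) ∧ ι_{e_j} κ`, computed in the basis `e`. -/
def hStar {E : Type*} [AddCommGroup E] [Module ℝ E] {n k : ℕ}
    (e : Fin n → E) (h : E → E → ℝ) (κ : (Fin (k + 1) → E) → ℝ) : (Fin (k + 1) → E) → ℝ :=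
  fun v => -∑ j : Fin n, wedge1 (fun w => h (e j) w) (ins (e j) κ) v


set_option maxHeartbeats 4000000

lemma fc1 {E : Type*} (x : E) (v : Fin 2 → E) : (Fin.cons x v : Fin 3 → E) 1 = v 0 := rfl
lemma fc2 {E : Type*} (x : E) (v : Fin 2 → E) : (Fin.cons x v : Fin 3 → E) 2 = v 1 := rfl
lemma fc1' {E : Type*} (x : E) (v : Fin 1 → E) : (Fin.cons x v : Fin 2 → E) 1 = v 0 := rfl

/-- If `h` is a symmetric bilinear form on `ℝ^6` with vanishing trace,
`h_*ω₀ = 0` and `h_*(Re Ω₀) = 0`, then `h = 0`. -/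
theorem statement10
    (h : EuclideanSpace ℝ (Fin 6) →ₗ[ℝ] EuclideanSpace ℝ (Fin 6) →ₗ[ℝ] ℝ)
    (hsymm : ∀ v w, h v w = h w v)
    (htrace : ∑ i : Fin 6, h (sb i) (sb i) = 0)
    (hvan2 : hStar sb (fun a b => h a b) omega0 = 0)
    (hvan3 : hStar sb (fun a b => h a b) reOmega0 = 0) :
    h = 0 := by
  -- extract pointwise equations
  have Tr : ∑ i : Fin 6, h (sb i) (sb i) = 0 := htrace
  have S01 : h (sb 0) (sb 1) = h (sb 1) (sb 0) := hsymm _ _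
  have S02 : h (sb 0) (sb 2) = h (sb 2) (sb 0) := hsymm _ _
  have S03 : h (sb 0) (sb 3) = h (sb 3) (sb 0) := hsymm _ _
  have S04 : h (sb 0) (sb 4) = h (sb 4) (sb 0) := hsymm _ _
  have S05 : h (sb 0) (sb 5) = h (sb 5) (sb 0) := hsymm _ _
  have S12 : h (sb 1) (sb 2) = h (sb 2) (sb 1) := hsymm _ _
  have S13 : h (sb 1) (sb 3) = h (sb 3) (sb 1) := hsymm _ _
  have S14 : h (sb 1) (sb 4) = h (sb 4) (sb 1) := hsymm _ _
  have S15 : h (sb 1) (sb 5) = h (sb 5) (sb 1) := hsymm _ _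
  have S23 : h (sb 2) (sb 3) = h (sb 3) (sb 2) := hsymm _ _
  have S24 : h (sb 2) (sb 4) = h (sb 4) (sb 2) := hsymm _ _
  have S25 : h (sb 2) (sb 5) = h (sb 5) (sb 2) := hsymm _ _
  have S34 : h (sb 3) (sb 4) = h (sb 4) (sb 3) := hsymm _ _
  have S35 : h (sb 3) (sb 5) = h (sb 5) (sb 3) := hsymm _ _
  have S45 : h (sb 4) (sb 5) = h (sb 5) (sb 4) := hsymm _ _
  have W01 : hStar sb (fun a b => h a b) omega0 ![sb 0, sb 1] = 0 := by rw [hvan2]; rfl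
  have W02 : hStar sb (fun a b => h a b) omega0 ![sb 0, sb 2] = 0 := by rw [hvan2]; rfl
  have W03 : hStar sb (fun a b => h a b) omega0 ![sb 0, sb 3] = 0 := by rw [hvan2]; rfl
  have W04 : hStar sb (fun a b => h a b) omega0 ![sb 0, sb 4] = 0 := by rw [hvan2]; rfl
  have W05 : hStar sb (fun a b => h a b) omega0 ![sb 0, sb 5] = 0 := by rw [hvan2]; rfl
  have W12 : hStar sb (fun a b => h a b) omega0 ![sb 1, sb 2] = 0 := by rw [hvan2]; rfl
  have W13 : hStar sb (fun a b => h a b) omega0 ![sb 1, sb 3] = 0 := by rw [hvan2]; rfl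
  have W14 : hStar sb (fun a b => h a b) omega0 ![sb 1, sb 4] = 0 := by rw [hvan2]; rfl
  have W15 : hStar sb (fun a b => h a b) omega0 ![sb 1, sb 5] = 0 := by rw [hvan2]; rfl
  have W23 : hStar sb (fun a b => h a b) omega0 ![sb 2, sb 3] = 0 := by rw [hvan2]; rfl
  have W24 : hStar sb (fun a b => h a b) omega0 ![sb 2, sb 4] = 0 := by rw [hvan2]; rfl
  have W25 : hStar sb (fun a b => h a b) omega0 ![sb 2, sb 5] = 0 := by rw [hvan2]; rfl
  have W34 : hStar sb (fun a b => h a b) omega0 ![sb 3, sb 4] = 0 := by rw [hvan2]; rfl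
  have W35 : hStar sb (fun a b => h a b) omega0 ![sb 3, sb 5] = 0 := by rw [hvan2]; rfl
  have W45 : hStar sb (fun a b => h a b) omega0 ![sb 4, sb 5] = 0 := by rw [hvan2]; rfl
  have R012 : hStar sb (fun a b => h a b) reOmega0 ![sb 0, sb 1, sb 2] = 0 := by rw [hvan3]; rfl
  have R013 : hStar sb (fun a b => h a b) reOmega0 ![sb 0, sb 1, sb 3] = 0 := by rw [hvan3]; rfl
  have R014 : hStar sb (fun a b => h a b) reOmega0 ![sb 0, sb 1, sb 4] = 0 := by rw [hvan3]; rfl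
  have R015 : hStar sb (fun a b => h a b) reOmega0 ![sb 0, sb 1, sb 5] = 0 := by rw [hvan3]; rfl
  have R023 : hStar sb (fun a b => h a b) reOmega0 ![sb 0, sb 2, sb 3] = 0 := by rw [hvan3]; rfl
  have R024 : hStar sb (fun a b => h a b) reOmega0 ![sb 0, sb 2, sb 4] = 0 := by rw [hvan3]; rfl
  have R025 : hStar sb (fun a b => h a b) reOmega0 ![sb 0, sb 2, sb 5] = 0 := by rw [hvan3]; rfl
  have R034 : hStar sb (fun a b => h a b) reOmega0 ![sb 0, sb 3, sb 4] = 0 := by rw [hvan3]; rfl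
  have R035 : hStar sb (fun a b => h a b) reOmega0 ![sb 0, sb 3, sb 5] = 0 := by rw [hvan3]; rfl
  have R045 : hStar sb (fun a b => h a b) reOmega0 ![sb 0, sb 4, sb 5] = 0 := by rw [hvan3]; rfl
  have R123 : hStar sb (fun a b => h a b) reOmega0 ![sb 1, sb 2, sb 3] = 0 := by rw [hvan3]; rfl
  have R124 : hStar sb (fun a b => h a b) reOmega0 ![sb 1, sb 2, sb 4] = 0 := by rw [hvan3]; rfl
  have R125 : hStar sb (fun a b => h a b) reOmega0 ![sb 1, sb 2, sb 5] = 0 := by rw [hvan3]; rfl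
  have R134 : hStar sb (fun a b => h a b) reOmega0 ![sb 1, sb 3, sb 4] = 0 := by rw [hvan3]; rfl
  have R135 : hStar sb (fun a b => h a b) reOmega0 ![sb 1, sb 3, sb 5] = 0 := by rw [hvan3]; rfl
  have R145 : hStar sb (fun a b => h a b) reOmega0 ![sb 1, sb 4, sb 5] = 0 := by rw [hvan3]; rfl
  have R234 : hStar sb (fun a b => h a b) reOmega0 ![sb 2, sb 3, sb 4] = 0 := by rw [hvan3]; rfl
  have R235 : hStar sb (fun a b => h a b) reOmega0 ![sb 2, sb 3, sb 5] = 0 := by rw [hvan3]; rfl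
  have R245 : hStar sb (fun a b => h a b) reOmega0 ![sb 2, sb 4, sb 5] = 0 := by rw [hvan3]; rfl
  have R345 : hStar sb (fun a b => h a b) reOmega0 ![sb 3, sb 4, sb 5] = 0 := by rw [hvan3]; rfl
  simp [hStar, wedge1, ins, omega0, reOmega0, form2, form3, sb, Matrix.det_fin_three,
    Fin.sum_univ_six, Fin.sum_univ_three, Fin.sum_univ_two, Fin.succAbove,
    fc1, fc2, fc1', EuclideanSpace.single_apply] at Tr S01 S02 S03 S04 S05 S12 S13 S14 S15 S23 S24 S25 S34 S35 S45 W01 W02 W03 W04 W05 W12 W13 W14 W15 W23 W24 W25 W34 W35 W45 R012 R013 R014 R015 R023 R024 R025 R034 R035 R045 R123 R124 R125 R134 R135 R145 R234 R235 R245 R345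
  -- conclude entrywise vanishing
  refine (EuclideanSpace.basisFun (Fin 6) ℝ).toBasis.ext fun i => (EuclideanSpace.basisFun (Fin 6) ℝ).toBasis.ext fun j => ?_
  simp only [OrthonormalBasis.coe_toBasis, EuclideanSpace.basisFun_apply, LinearMap.zero_apply]
  fin_cases i <;> fin_cases j <;>
    simp only [Fin.isValue, Fin.reduceFinMk, Fin.zero_eta, Fin.mk_one]
  · linear_combination (-1/2 : ℝ) * Tr + (-1/2 : ℝ) * W01 + (-1/2 : ℝ) * R024 + (1/2 : ℝ) * R035
  · linear_combination (1 : ℝ) * S01 + (1/2 : ℝ) * S23 + (1/2 : ℝ) * S45 + (1/2 : ℝ) * R025 + (1/2 : ℝ) * R034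
  · linear_combination (1/2 : ℝ) * S02 + (1/2 : ℝ) * W12 + (-1/2 : ℝ) * R015
  · linear_combination (1/2 : ℝ) * S03 + (1/2 : ℝ) * W13 + (-1/2 : ℝ) * R014
  · linear_combination (1/2 : ℝ) * S04 + (1/2 : ℝ) * W14 + (1/2 : ℝ) * R013
  · linear_combination (1/2 : ℝ) * S05 + (1/2 : ℝ) * W15 + (1/2 : ℝ) * R012
  · linear_combination (1/2 : ℝ) * S23 + (1/2 : ℝ) * S45 + (1/2 : ℝ) * R025 + (1/2 : ℝ) * R034
  · linear_combination (1/2 : ℝ) * Tr + (-1/2 : ℝ) * W01 + (1/2 : ℝ) * R024 + (-1/2 : ℝ) * R035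
  · linear_combination (-1/2 : ℝ) * S03 + (-1 : ℝ) * W02 + (1/2 : ℝ) * W13 + (-1/2 : ℝ) * R014
  · linear_combination (1/2 : ℝ) * S02 + (-1 : ℝ) * W03 + (-1/2 : ℝ) * W12 + (1/2 : ℝ) * R015
  · linear_combination (1/2 : ℝ) * S05 + (1 : ℝ) * S14 + (-1/2 : ℝ) * W15 + (1/2 : ℝ) * R012
  · linear_combination (-1/2 : ℝ) * S04 + (1 : ℝ) * S15 + (1/2 : ℝ) * W14 + (-1/2 : ℝ) * R013
  · linear_combination (-1/2 : ℝ) * S02 + (1/2 : ℝ) * W12 + (-1/2 : ℝ) * R015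
  · linear_combination (1/2 : ℝ) * S03 + (-1/2 : ℝ) * W13 + (-1/2 : ℝ) * R014
  · linear_combination (-1/2 : ℝ) * Tr + (-1/2 : ℝ) * W23 + (-1/2 : ℝ) * R024 + (1/2 : ℝ) * R125
  · linear_combination (1/2 : ℝ) * S01 + (1 : ℝ) * S23 + (1/2 : ℝ) * S45 + (1/2 : ℝ) * R025 + (1/2 : ℝ) * R124
  · linear_combination (1/2 : ℝ) * S24 + (1/2 : ℝ) * W34 + (-1/2 : ℝ) * R123
  · linear_combination (1 : ℝ) * S25 + (1/2 : ℝ) * S34 + (1/2 : ℝ) * W24 + (-1/2 : ℝ) * R023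
  · linear_combination (-1/2 : ℝ) * S03 + (1/2 : ℝ) * W13 + (-1/2 : ℝ) * R014
  · linear_combination (-1/2 : ℝ) * S02 + (1/2 : ℝ) * W12 + (1/2 : ℝ) * R015
  · linear_combination (1/2 : ℝ) * S01 + (1/2 : ℝ) * S45 + (1/2 : ℝ) * R025 + (1/2 : ℝ) * R124
  · linear_combination (1/2 : ℝ) * Tr + (-1/2 : ℝ) * W23 + (1/2 : ℝ) * R024 + (-1/2 : ℝ) * R125
  · linear_combination (1/2 : ℝ) * S34 + (-1/2 : ℝ) * W24 + (-1/2 : ℝ) * R023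
  · linear_combination (1/2 : ℝ) * S24 + (-1 : ℝ) * W25 + (-1/2 : ℝ) * W34 + (1/2 : ℝ) * R123
  · linear_combination (-1/2 : ℝ) * S04 + (1/2 : ℝ) * W14 + (1/2 : ℝ) * R013
  · linear_combination (1/2 : ℝ) * S05 + (-1/2 : ℝ) * W15 + (1/2 : ℝ) * R012
  · linear_combination (-1/2 : ℝ) * S24 + (1/2 : ℝ) * W34 + (-1/2 : ℝ) * R123
  · linear_combination (-1/2 : ℝ) * S34 + (-1/2 : ℝ) * W24 + (-1/2 : ℝ) * R023
  · linear_combination (1 : ℝ) * Tr + (1/2 : ℝ) * W01 + (1/2 : ℝ) * W23 + (-1/2 : ℝ) * R035 + (-1/2 : ℝ) * R125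
  · linear_combination (1/2 : ℝ) * S01 + (1/2 : ℝ) * S23 + (1 : ℝ) * S45 + (1/2 : ℝ) * R034 + (1/2 : ℝ) * R124
  · linear_combination (-1/2 : ℝ) * S05 + (1/2 : ℝ) * W15 + (1/2 : ℝ) * R012
  · linear_combination (-1/2 : ℝ) * S04 + (1/2 : ℝ) * W14 + (-1/2 : ℝ) * R013
  · linear_combination (1/2 : ℝ) * S34 + (1/2 : ℝ) * W24 + (-1/2 : ℝ) * R023
  · linear_combination (-1/2 : ℝ) * S24 + (1/2 : ℝ) * W34 + (1/2 : ℝ) * R123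
  · linear_combination (1/2 : ℝ) * S01 + (1/2 : ℝ) * S23 + (1/2 : ℝ) * R034 + (1/2 : ℝ) * R124
  · linear_combination (1/2 : ℝ) * W01 + (1/2 : ℝ) * W23 + (1/2 : ℝ) * R035 + (1/2 : ℝ) * R125
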